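/- F is differentiable at every tensor M ∈ ℝ^{S^{T+1}}, and its gradient is ∇F(M) = C(M) + E(M), where E(M)(x_0,…,x_T) = Σ_{i=0}^{T−1} E_i(x_i) with E_i(y) = Σ_{(z,w)∈S×S} ∇W(z − y)ᵀ (w − z + (1/T)[∇W * P_i(M)](z) − (1/T) b(z)) · P_{i,i+1}(M)(z,w). -/

import Mathlib

open scoped BigOperators Classical

noncomputable section

namespace Stmt1

variable {d T : ℕ} {S : Finset (EuclideanSpace ℝ (Fin d))}

/-- The `i`-th marginal `P_i(M)(y) = Σ_{x : x_i = y} M(x)` of a tensor on `S^{T+1}`. -/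
def marg (M : (Fin (T + 1) → {x // x ∈ S}) → ℝ) (i : Fin (T + 1)) (y : {x // x ∈ S}) : ℝ :=
  ∑ x : Fin (T + 1) → {x // x ∈ S}, if x i = y then M x else 0

/-- The pairwise marginal `P_{i,i+1}(M)(y,z) = Σ_{x : x_i = y, x_{i+1} = z} M(x)`. -/
def margPair (M : (Fin (T + 1) → {x // x ∈ S}) → ℝ) (i : Fin T) (y z : {x // x ∈ S}) : ℝ :=
  ∑ x : Fin (T + 1) → {x // x ∈ S}, if x i.castSucc = y ∧ x i.succ = z then M x else 0

/-- The discrete convolution `[∇W * P_i(M)](y) = Σ_{z ∈ S} ∇W(y - z) P_i(M)(z)`. -/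
def convW (W : EuclideanSpace ℝ (Fin d) → ℝ) (M : (Fin (T + 1) → {x // x ∈ S}) → ℝ)
    (i : Fin (T + 1)) (y : EuclideanSpace ℝ (Fin d)) : EuclideanSpace ℝ (Fin d) :=
  ∑ z : {x // x ∈ S}, marg M i z • gradient W (y - (z : EuclideanSpace ℝ (Fin d)))

/-- The cost tensor `C(M)(x_0,…,x_T) = (1/T) Σ_{i=0}^{T-1} V(x_i)
  + Σ_{i=0}^{T-1} (T/2) ‖x_{i+1} - x_i + (1/T)[∇W * P_i(M)](x_i) - (1/T) b(x_i)‖²`. -/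
def costC (W : EuclideanSpace ℝ (Fin d) → ℝ)
    (b : EuclideanSpace ℝ (Fin d) → EuclideanSpace ℝ (Fin d))
    (V : EuclideanSpace ℝ (Fin d) → ℝ)
    (M : (Fin (T + 1) → {x // x ∈ S}) → ℝ)
    (x : Fin (T + 1) → {x // x ∈ S}) : ℝ :=
  (1 / (T : ℝ)) * ∑ i : Fin T, V (x i.castSucc : EuclideanSpace ℝ (Fin d))
  + ∑ i : Fin T, ((T : ℝ) / 2) *
    ‖(x i.succ : EuclideanSpace ℝ (Fin d)) - (x i.castSucc : EuclideanSpace ℝ (Fin d))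
      + (1 / (T : ℝ)) • convW W M i.castSucc (x i.castSucc : EuclideanSpace ℝ (Fin d))
      - (1 / (T : ℝ)) • b (x i.castSucc : EuclideanSpace ℝ (Fin d))‖ ^ 2

/-- `F(M) = ⟨C(M), M⟩ = Σ_x C(M)(x) M(x)`. -/
def Ffun (W : EuclideanSpace ℝ (Fin d) → ℝ)
    (b : EuclideanSpace ℝ (Fin d) → EuclideanSpace ℝ (Fin d))
    (V : EuclideanSpace ℝ (Fin d) → ℝ)
    (M : (Fin (T + 1) → {x // x ∈ S}) → ℝ) : ℝ :=
  ∑ x : Fin (T + 1) → {x // x ∈ S}, costC W b V M x * M x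

/-- `E_i(y) = Σ_{(z,w) ∈ S×S} ∇W(z-y)ᵀ (w - z + (1/T)[∇W * P_i(M)](z) - (1/T) b(z))
  · P_{i,i+1}(M)(z,w)`. -/
def Ei (W : EuclideanSpace ℝ (Fin d) → ℝ)
    (b : EuclideanSpace ℝ (Fin d) → EuclideanSpace ℝ (Fin d))
    (M : (Fin (T + 1) → {x // x ∈ S}) → ℝ)
    (i : Fin T) (y : EuclideanSpace ℝ (Fin d)) : ℝ :=
  ∑ z : {x // x ∈ S}, ∑ w : {x // x ∈ S},
    (inner ℝ (gradient W ((z : EuclideanSpace ℝ (Fin d)) - y))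
      ((w : EuclideanSpace ℝ (Fin d)) - (z : EuclideanSpace ℝ (Fin d))
        + (1 / (T : ℝ)) • convW W M i.castSucc (z : EuclideanSpace ℝ (Fin d))
        - (1 / (T : ℝ)) • b (z : EuclideanSpace ℝ (Fin d))) : ℝ)
    * margPair M i z w

/-- `E(M)(x_0,…,x_T) = Σ_{i=0}^{T-1} E_i(x_i)`. -/
def Etens (W : EuclideanSpace ℝ (Fin d) → ℝ)
    (b : EuclideanSpace ℝ (Fin d) → EuclideanSpace ℝ (Fin d))
    (M : (Fin (T + 1) → {x // x ∈ S}) → ℝ)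
    (x : Fin (T + 1) → {x // x ∈ S}) : ℝ :=
  ∑ i : Fin T, Ei W b M i (x i.castSucc : EuclideanSpace ℝ (Fin d))

/-! ### Auxiliary definitions and lemmas for the proof -/

/-- `marg · i z` as a continuous linear map. -/
def margCLM (i : Fin (T + 1)) (z : {x // x ∈ S}) :
    EuclideanSpace ℝ (Fin (T + 1) → {x // x ∈ S}) →L[ℝ] ℝ :=
  ∑ x : Fin (T + 1) → {x // x ∈ S}, if x i = z then EuclideanSpace.proj x else 0

lemma margCLM_apply (i : Fin (T + 1)) (z : {x // x ∈ S})
    (N : EuclideanSpace ℝ (Fin (T + 1) → {x // x ∈ S})) :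
    margCLM i z N = marg N i z := by
  rw [margCLM, marg, ContinuousLinearMap.sum_apply]
  refine Finset.sum_congr rfl fun x _ => ?_
  split_ifs <;> simp

/-- `convW W · i y` as a continuous linear map. -/
def convCLM (W : EuclideanSpace ℝ (Fin d) → ℝ) (i : Fin (T + 1))
    (y : EuclideanSpace ℝ (Fin d)) :
    EuclideanSpace ℝ (Fin (T + 1) → {x // x ∈ S}) →L[ℝ] EuclideanSpace ℝ (Fin d) :=
  ∑ z : {x // x ∈ S}, (margCLM i z).smulRight (gradient W (y - (z : EuclideanSpace ℝ (Fin d))))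

lemma convCLM_apply (W : EuclideanSpace ℝ (Fin d) → ℝ) (i : Fin (T + 1))
    (y : EuclideanSpace ℝ (Fin d)) (N : EuclideanSpace ℝ (Fin (T + 1) → {x // x ∈ S})) :
    convCLM W i y N = convW W N i y := by
  simp [convCLM, convW, ContinuousLinearMap.sum_apply, margCLM_apply]

/-- The vector appearing inside the squared norm of the cost. -/
def vecv (W : EuclideanSpace ℝ (Fin d) → ℝ)
    (b : EuclideanSpace ℝ (Fin d) → EuclideanSpace ℝ (Fin d))
    (M : (Fin (T + 1) → {x // x ∈ S}) → ℝ)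
    (i : Fin T) (x : Fin (T + 1) → {x // x ∈ S}) : EuclideanSpace ℝ (Fin d) :=
  (x i.succ : EuclideanSpace ℝ (Fin d)) - (x i.castSucc : EuclideanSpace ℝ (Fin d))
    + (1 / (T : ℝ)) • convW W M i.castSucc (x i.castSucc : EuclideanSpace ℝ (Fin d))
    - (1 / (T : ℝ)) • b (x i.castSucc : EuclideanSpace ℝ (Fin d))

lemma hasFDerivAt_norm_sq_affine {G : Type*} [NormedAddCommGroup G] [NormedSpace ℝ G]
    {F : Type*} [NormedAddCommGroup F] [InnerProductSpace ℝ F]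
    (w : F) (ℓ : G →L[ℝ] F) (M : G) :
    HasFDerivAt (fun N => ‖w + ℓ N‖ ^ 2)
      ((2 : ℝ) • ((innerSL ℝ (w + ℓ M)).comp ℓ)) M := by
  have hφ : HasFDerivAt (fun N : G => w + ℓ N) ℓ M := ℓ.hasFDerivAt.const_add w
  have h := hφ.inner ℝ hφ
  have heq : (fun N : G => ‖w + ℓ N‖ ^ 2)
      = fun N : G => (inner ℝ (w + ℓ N) (w + ℓ N) : ℝ) := by
    funext N; rw [real_inner_self_eq_norm_sq]
  rw [heq]
  refine h.congr_fderiv ?_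
  refine ContinuousLinearMap.ext fun H => ?_
  simp only [fderivInnerCLM_apply, ContinuousLinearMap.comp_apply,
    ContinuousLinearMap.prod_apply, ContinuousLinearMap.smul_apply, smul_eq_mul,
    innerSL_apply_apply, inner_add_left, inner_add_right, real_inner_comm (ℓ H) w,
    real_inner_comm (ℓ H) (ℓ M)]
  ring

lemma Ei_eq (W : EuclideanSpace ℝ (Fin d) → ℝ)
    (b : EuclideanSpace ℝ (Fin d) → EuclideanSpace ℝ (Fin d))
    (M : (Fin (T + 1) → {x // x ∈ S}) → ℝ) (i : Fin T) (y : EuclideanSpace ℝ (Fin d)) :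
    Ei W b M i y = ∑ x : Fin (T + 1) → {x // x ∈ S},
      (inner ℝ (gradient W ((x i.castSucc : EuclideanSpace ℝ (Fin d)) - y))
        (vecv W b M i x) : ℝ) * M x := by
  simp only [Ei, margPair, Finset.mul_sum, mul_ite, mul_zero]
  rw [Finset.sum_congr rfl fun z _ => Finset.sum_comm, Finset.sum_comm]
  refine Finset.sum_congr rfl fun x _ => ?_
  simp [ite_and, Finset.sum_ite_eq, vecv]


lemma swap3 {α : Type*} [Fintype α] (F : α → Fin T → α → ℝ) :
    ∑ x : α, ∑ i : Fin T, ∑ y : α, F x i y = ∑ y : α, ∑ i : Fin T, ∑ x : α, F x i y := by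
  rw [Finset.sum_comm]
  rw [Finset.sum_congr rfl fun i _ => Finset.sum_comm]
  rw [Finset.sum_comm]

set_option maxHeartbeats 2000000 in
lemma key (W : EuclideanSpace ℝ (Fin d) → ℝ)
    (b : EuclideanSpace ℝ (Fin d) → EuclideanSpace ℝ (Fin d))
    (M H : (Fin (T + 1) → {x // x ∈ S}) → ℝ) :
    ∑ x : Fin (T + 1) → {x // x ∈ S}, Etens W b M x * H x
      = ∑ x : Fin (T + 1) → {x // x ∈ S}, M x *
          ∑ i : Fin T, (inner ℝ (vecv W b M i x)
            (convW W H i.castSucc (x i.castSucc : EuclideanSpace ℝ (Fin d))) : ℝ) := by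
  have hR : ∀ (x : Fin (T + 1) → {x // x ∈ S}) (i : Fin T),
      (inner ℝ (vecv W b M i x)
          (convW W H i.castSucc (x i.castSucc : EuclideanSpace ℝ (Fin d))) : ℝ)
        = ∑ y : Fin (T + 1) → {x // x ∈ S}, H y *
            (inner ℝ (vecv W b M i x)
              (gradient W ((x i.castSucc : EuclideanSpace ℝ (Fin d))
                - (y i.castSucc : EuclideanSpace ℝ (Fin d)))) : ℝ) := by
    intro x i
    rw [convW, inner_sum]
    simp only [real_inner_smul_left, real_inner_smul_right, marg, Finset.sum_mul,
      ite_mul, zero_mul]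
    rw [Finset.sum_comm]
    refine Finset.sum_congr rfl fun y _ => ?_
    simp [Finset.sum_ite_eq]
  simp only [Etens, Ei_eq, hR, Finset.sum_mul, Finset.mul_sum]
  have step : ∀ x : Fin (T + 1) → {x // x ∈ S},
      (∑ i : Fin T, ∑ y : Fin (T + 1) → {x // x ∈ S},
        (inner ℝ (gradient W ((y i.castSucc : EuclideanSpace ℝ (Fin d))
            - (x i.castSucc : EuclideanSpace ℝ (Fin d)))) (vecv W b M i y) : ℝ) * M y * H x)
      = ∑ i : Fin T, ∑ y : Fin (T + 1) → {x // x ∈ S},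
        M y * (H x * (inner ℝ (vecv W b M i y)
          (gradient W ((y i.castSucc : EuclideanSpace ℝ (Fin d))
            - (x i.castSucc : EuclideanSpace ℝ (Fin d)))) : ℝ)) := by
    intro x
    refine Finset.sum_congr rfl fun i _ => Finset.sum_congr rfl fun y _ => ?_
    rw [real_inner_comm]
    ring
  rw [Finset.sum_congr rfl fun x _ => step x]
  exact swap3 (fun x i y => M y * (H x * (inner ℝ (vecv W b M i y)
    (gradient W ((y i.castSucc : EuclideanSpace ℝ (Fin d))
      - (x i.castSucc : EuclideanSpace ℝ (Fin d)))) : ℝ)))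


set_option maxHeartbeats 2000000 in
/-- `F` is differentiable at every tensor `M`, with gradient
`∇F(M) = C(M) + E(M)`. -/
theorem statement_1 (hT : 1 ≤ T) (hS : S.Nonempty)
    (W : EuclideanSpace ℝ (Fin d) → ℝ) (hW : ContDiff ℝ 1 W)
    (b : EuclideanSpace ℝ (Fin d) → EuclideanSpace ℝ (Fin d)) (hb : Continuous b)
    (V : EuclideanSpace ℝ (Fin d) → ℝ)
    (M : EuclideanSpace ℝ (Fin (T + 1) → {x // x ∈ S})) :
    DifferentiableAt ℝ
      (fun N : EuclideanSpace ℝ (Fin (T + 1) → {x // x ∈ S}) => Ffun W b V N) M ∧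
    ∀ x : Fin (T + 1) → {x // x ∈ S},
      gradient (fun N : EuclideanSpace ℝ (Fin (T + 1) → {x // x ∈ S}) => Ffun W b V N) M x
        = costC W b V M x + Etens W b M x := by
  classical
  have hT0 : (T : ℝ) ≠ 0 := Nat.cast_ne_zero.mpr (by omega)
  -- the claimed gradient
  set g : EuclideanSpace ℝ (Fin (T + 1) → {x // x ∈ S}) := WithLp.toLp 2 (fun x => costC W b V M x + Etens W b M x) with hg
  -- the second factor of the derivative of the cost
  set Dq : (Fin (T + 1) → {x // x ∈ S}) → (EuclideanSpace ℝ (Fin (T + 1) → {x // x ∈ S}) →L[ℝ] ℝ) := fun x =>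
    ∑ i : Fin T, (innerSL ℝ (vecv W b M i x)).comp
      (convCLM W i.castSucc (x i.castSucc : EuclideanSpace ℝ (Fin d))) with hDq
  -- derivative of the cost
  have hcost : ∀ x : Fin (T + 1) → {x // x ∈ S},
      HasFDerivAt (fun N : EuclideanSpace ℝ (Fin (T + 1) → {x // x ∈ S}) => costC W b V N x) (Dq x) M := by
    intro x
    have hterm : ∀ i : Fin T, HasFDerivAt
        (fun N : EuclideanSpace ℝ (Fin (T + 1) → {x // x ∈ S}) => ((T : ℝ) / 2) *
          ‖(x i.succ : EuclideanSpace ℝ (Fin d)) - (x i.castSucc : EuclideanSpace ℝ (Fin d))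
            + (1 / (T : ℝ)) • convW W N i.castSucc (x i.castSucc : EuclideanSpace ℝ (Fin d))
            - (1 / (T : ℝ)) • b (x i.castSucc : EuclideanSpace ℝ (Fin d))‖ ^ 2)
        ((innerSL ℝ (vecv W b M i x)).comp
          (convCLM W i.castSucc (x i.castSucc : EuclideanSpace ℝ (Fin d)))) M := by
      intro i
      set w : EuclideanSpace ℝ (Fin d) :=
        (x i.succ : EuclideanSpace ℝ (Fin d)) - (x i.castSucc : EuclideanSpace ℝ (Fin d))
          - (1 / (T : ℝ)) • b (x i.castSucc : EuclideanSpace ℝ (Fin d)) with hw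
      set L : EuclideanSpace ℝ (Fin (T + 1) → {x // x ∈ S}) →L[ℝ] EuclideanSpace ℝ (Fin d) :=
        (1 / (T : ℝ)) • convCLM W i.castSucc (x i.castSucc : EuclideanSpace ℝ (Fin d)) with hL
      have hvec : ∀ N : EuclideanSpace ℝ (Fin (T + 1) → {x // x ∈ S}),
          (x i.succ : EuclideanSpace ℝ (Fin d)) - (x i.castSucc : EuclideanSpace ℝ (Fin d))
            + (1 / (T : ℝ)) • convW W N i.castSucc (x i.castSucc : EuclideanSpace ℝ (Fin d))
            - (1 / (T : ℝ)) • b (x i.castSucc : EuclideanSpace ℝ (Fin d)) = w + L N := by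
        intro N
        rw [hw, hL]
        simp only [ContinuousLinearMap.smul_apply, convCLM_apply]
        abel
      have hwv : w + L M = vecv W b M i x := by
        rw [vecv, ← hvec M]
      have h2 := (hasFDerivAt_norm_sq_affine w L M).const_mul ((T : ℝ) / 2)
      have hd : ((T : ℝ) / 2) • ((2 : ℝ) • ((innerSL ℝ (w + L M)).comp L))
          = (innerSL ℝ (vecv W b M i x)).comp
            (convCLM W i.castSucc (x i.castSucc : EuclideanSpace ℝ (Fin d))) := by
        rw [hwv]
        refine ContinuousLinearMap.ext fun Hv => ?_
        simp only [ContinuousLinearMap.smul_apply, ContinuousLinearMap.comp_apply,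
          innerSL_apply_apply, hL, real_inner_smul_right, smul_eq_mul]
        field_simp
      simp only [hvec]
      exact hd ▸ h2
    have hsum := HasFDerivAt.fun_sum (u := Finset.univ) (fun i (_ : i ∈ Finset.univ) => hterm i)
    have hall := hsum.const_add
      ((1 / (T : ℝ)) * ∑ i : Fin T, V ((x i.castSucc : EuclideanSpace ℝ (Fin d))))
    exact hall
  -- derivative of each product term
  have hprod : ∀ x : Fin (T + 1) → {x // x ∈ S},
      HasFDerivAt (fun N : EuclideanSpace ℝ (Fin (T + 1) → {x // x ∈ S}) => costC W b V N x * N x)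
        (costC W b V M x • EuclideanSpace.proj x + M x • Dq x) M := by
    intro x
    have hev : HasFDerivAt (𝕜 := ℝ) (F := ℝ) (fun N : EuclideanSpace ℝ (Fin (T + 1) → {x // x ∈ S}) => (N x : ℝ))
        (EuclideanSpace.proj x) M := by
      have h := ContinuousLinearMap.hasFDerivAt (x := M)
        (EuclideanSpace.proj x : EuclideanSpace ℝ (Fin (T + 1) → {x // x ∈ S}) →L[ℝ] ℝ)
      exact h
    exact (hcost x).mul hev
  -- derivative of F
  have hF : HasFDerivAt (fun N : EuclideanSpace ℝ (Fin (T + 1) → {x // x ∈ S}) => Ffun W b V N)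
      (∑ x : Fin (T + 1) → {x // x ∈ S},
        (costC W b V M x • EuclideanSpace.proj x + M x • Dq x)) M :=
    HasFDerivAt.fun_sum (u := Finset.univ) (fun x (_ : x ∈ Finset.univ) => hprod x)
  -- the Fréchet derivative is `toDual g`
  have hdual : (InnerProductSpace.toDual ℝ (EuclideanSpace ℝ (Fin (T + 1) → {x // x ∈ S}))) g
      = ∑ x : Fin (T + 1) → {x // x ∈ S},
        (costC W b V M x • EuclideanSpace.proj x + M x • Dq x) := by
    refine ContinuousLinearMap.ext fun Hv => ?_
    rw [InnerProductSpace.toDual_apply_apply, PiLp.inner_apply]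
    simp only [RCLike.inner_apply, conj_trivial, ContinuousLinearMap.sum_apply,
      ContinuousLinearMap.add_apply, ContinuousLinearMap.smul_apply,
      smul_eq_mul, hDq, ContinuousLinearMap.comp_apply,
      innerSL_apply_apply, convCLM_apply, hg]
    simp only [mul_comm (Hv.ofLp _), add_mul]
    rw [Finset.sum_add_distrib, Finset.sum_add_distrib, key W b M Hv]
    rfl
  have hgrad : HasGradientAt (fun N : EuclideanSpace ℝ (Fin (T + 1) → {x // x ∈ S}) => Ffun W b V N) g M := by
    rw [hasGradientAt_iff_hasFDerivAt, hdual]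
    exact hF
  refine ⟨hgrad.differentiableAt, fun x => ?_⟩
  rw [hgrad.gradient]

end Stmt1
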